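/- Let (e_1,...,e_r) be a T-chain of type (d,n,a) with discrepancies delta_1,...,delta_r. Then there exist positive integers t_1,...,t_r such that delta_i = -1 + t_i/n for every i, and t_1 + t_r = n. Moreover, the discrepancies of the T-chain (e_1 + 1, e_2, ..., e_r, 2) are, in order, -1 + t_1/(n+t_1), ..., -1 + t_r/(n+t_1), -1 + (t_1+t_r)/(n+t_1); and the discrepancies of the T-chain (2, e_1, ..., e_{r-1}, e_r + 1) are, in order, -1 + (t_1+t_r)/(n+t_r), -1 + t_1/(n+t_r), ..., -1 + t_r/(n+t_r). -/

import Mathlib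

/-- Hirzebruch-Jung continued fraction value `[e₁,...,e_r] = e₁ - 1/[e₂,...,e_r]`. -/
def hjVal : List ℤ → ℚ
  | [] => 0
  | e :: l => (e : ℚ) - 1 / hjVal l

/-- Add `1` to the first entry of a list. -/
def plusFirst : List ℤ → List ℤ
  | [] => []
  | e :: l => (e + 1) :: l

/-- Add `1` to the last entry of a list. -/
def plusLast : List ℤ → List ℤ
  | [] => []
  | [e] => [e + 1]
  | e :: l => e :: plusLast l

/-- `δ` (indexed `1,...,r` with the convention `δ 0 = δ (r+1) = 0`) is the sequence of
discrepancies of the chain `e = (e₁,...,e_r)`: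
`δ_{i-1} - e_i δ_i + δ_{i+1} = e_i - 2` for `1 ≤ i ≤ r`. -/
def IsDiscrepancy (e : List ℤ) (δ : ℕ → ℚ) : Prop :=
  δ 0 = 0 ∧ δ (e.length + 1) = 0 ∧
  ∀ i : ℕ, 1 ≤ i → i ≤ e.length →
    δ (i - 1) - (e.getD (i - 1) 0 : ℚ) * δ i + δ (i + 1)
      = (e.getD (i - 1) 0 : ℚ) - 2


/-! ### Auxiliary development: continuants -/

/-- Continuant `K(e₁,...,e_r)` for the negative continued fraction. -/
def TCcont : List ℤ → ℤ
  | [] => 1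
  | [x] => x
  | x :: y :: l => x * TCcont (y :: l) - TCcont l

/-- Forward solution of `u_{i+1} = e_i u_i - u_{i-1}`, `u_0 = 0`, `u_1 = 1`. -/
def TCfwd (e : List ℤ) : ℕ → ℤ
  | 0 => 0
  | 1 => 1
  | (i+2) => e.getD i 0 * TCfwd e (i+1) - TCfwd e i

/-- Backward solution: `v_i = K(e_{i+1},...,e_r)` for `i ≤ r`, `0` beyond. -/
def TCbwd (e : List ℤ) (i : ℕ) : ℤ := if i ≤ e.length then TCcont (e.drop i) else 0

lemma TCcont_cons (a : ℤ) (l : List ℤ) (h : l ≠ []) :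
    TCcont (a :: l) = a * TCcont l - TCcont l.tail := by
  cases l with
  | nil => simp at h
  | cons y l' => rfl

lemma TCcont_ge (l : List ℤ) (h : ∀ x ∈ l, 2 ≤ x) :
    1 ≤ TCcont l ∧ TCcont l.tail ≤ TCcont l := by
  induction l with
  | nil => simp [TCcont]
  | cons x l ih =>
    have hx : 2 ≤ x := h x (by simp)
    have ih' := ih (fun y hy => h y (by simp [hy]))
    cases l with
    | nil => constructor <;> simp [TCcont] <;> omega
    | cons y l' =>
      have h1 : 1 ≤ TCcont (y :: l') := ih'.1
      have h2 : TCcont l' ≤ TCcont (y :: l') := ih'.2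
      constructor
      · show 1 ≤ x * TCcont (y :: l') - TCcont l'
        nlinarith
      · show TCcont (y :: l') ≤ x * TCcont (y :: l') - TCcont l'
        nlinarith

lemma TChjVal_eq (l : List ℤ) (hne : l ≠ []) (h2 : ∀ x ∈ l, 2 ≤ x) :
    hjVal l = (TCcont l : ℚ) / (TCcont l.tail : ℚ) := by
  induction l with
  | nil => simp at hne
  | cons x l ih =>
    cases l with
    | nil => simp [hjVal, TCcont]
    | cons y l' =>
      have hy2 : ∀ z ∈ y :: l', 2 ≤ z := fun z hz => h2 z (by simp [hz])
      have ih' := ih (by simp) hy2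
      have h1 : (1:ℤ) ≤ TCcont (y :: l') := (TCcont_ge _ hy2).1
      have h0 : ((TCcont (y :: l') : ℤ) : ℚ) ≠ 0 := by
        exact_mod_cast (by omega : (TCcont (y :: l') : ℤ) ≠ 0)
      rw [show hjVal (x :: y :: l') = (x : ℚ) - 1 / hjVal (y :: l') from rfl, ih',
        TCcont_cons x (y :: l') (by simp)]
      rw [one_div_div]
      show (x : ℚ) - _ = ((x * TCcont (y :: l') - TCcont (y :: l').tail : ℤ) : ℚ) / _
      push_cast
      simp only [List.tail_cons]
      field_simp

lemma TCcont_coprime (l : List ℤ) : IsCoprime (TCcont l) (TCcont l.tail) := by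
  induction l with
  | nil => exact isCoprime_one_left
  | cons x l ih =>
    cases l with
    | nil => exact isCoprime_one_right
    | cons y l' =>
      obtain ⟨u, v, huv0⟩ := ih
      have huv : u * TCcont (y :: l') + v * TCcont l' = 1 := by simpa using huv0
      refine ⟨-v, u + v * x, ?_⟩
      show (-v) * (x * TCcont (y :: l') - TCcont l') + (u + v * x) * TCcont (y :: l') = 1
      linear_combination huv

lemma TCbwd_rec (e : List ℤ) (j : ℕ) (hj : j < e.length) :
    TCbwd e j = e.getD j 0 * TCbwd e (j + 1) - TCbwd e (j + 2) := by
  have hdrop : e.getD j 0 :: e.drop (j + 1) = e.drop j := by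
    rw [List.getD_eq_getElem e 0 hj]; exact List.getElem_cons_drop hj
  rcases lt_or_eq_of_le (Nat.succ_le_of_lt hj) with hj1 | hj1
  · -- j + 1 < e.length
    have hne : e.drop (j + 1) ≠ [] := by
      simp only [ne_eq, List.drop_eq_nil_iff]; omega
    have key : TCcont (e.drop j) = e.getD j 0 * TCcont (e.drop (j+1)) - TCcont (e.drop (j+2)) := by
      rw [← hdrop, TCcont_cons _ _ hne, List.tail_drop]
    unfold TCbwd
    rw [if_pos (by omega), if_pos (by omega), if_pos (by omega)]
    exact key
  · -- j + 1 = e.length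
    have hd2 : e.drop (j + 1) = [] := by
      simp only [List.drop_eq_nil_iff]; omega
    have key : e.drop j = [e.getD j 0] := by rw [← hdrop, hd2]
    unfold TCbwd
    rw [if_pos (by omega), if_pos (by omega), if_neg (by omega), key, hd2]
    simp [TCcont]

lemma TCfwd_pos (e : List ℤ) (he2 : ∀ x ∈ e, 2 ≤ x) :
    ∀ i, i ≤ e.length → 0 ≤ TCfwd e i ∧ TCfwd e i < TCfwd e (i + 1) := by
  intro i
  induction i with
  | zero => intro _; simp [TCfwd]
  | succ i ih =>
    intro hi
    obtain ⟨h0, h1⟩ := ih (by omega)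
    have hi' : i < e.length := by omega
    have he : 2 ≤ e.getD i 0 := by
      rw [List.getD_eq_getElem e 0 hi']
      exact he2 _ (List.getElem_mem hi')
    have : TCfwd e (i + 2) = e.getD i 0 * TCfwd e (i + 1) - TCfwd e i := rfl
    constructor
    · omega
    · rw [this]; nlinarith

lemma TCwronskian (e : List ℤ) (i : ℕ) (hi : i ≤ e.length) :
    TCfwd e (i + 1) * TCbwd e i - TCfwd e i * TCbwd e (i + 1) = TCcont e := by
  induction i with
  | zero =>
    simp [TCfwd, TCbwd]
  | succ i ih =>
    have ih' := ih (by omega)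
    have hu : TCfwd e (i + 2) = e.getD i 0 * TCfwd e (i + 1) - TCfwd e i := rfl
    have hv : TCbwd e (i + 2) = e.getD i 0 * TCbwd e (i + 1) - TCbwd e i := by
      have := TCbwd_rec e i (by omega)
      linarith
    rw [hu, hv]
    linear_combination ih'

lemma TCfwd_top (e : List ℤ) : TCfwd e (e.length + 1) = TCcont e := by
  have := TCwronskian e e.length le_rfl
  have h1 : TCbwd e e.length = 1 := by simp [TCbwd, TCcont]
  have h2 : TCbwd e (e.length + 1) = 0 := by simp [TCbwd]
  rw [h1, h2] at this
  linarith

lemma TCtail_wronskian (e : List ℤ) (j : ℕ) (hj : j + 1 ≤ e.length) :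
    TCfwd e (j + 2) * TCfwd e.tail j - TCfwd e (j + 1) * TCfwd e.tail (j + 1) = -1 := by
  induction j with
  | zero =>
    have : TCfwd e 2 = e.getD 0 0 * TCfwd e 1 - TCfwd e 0 := rfl
    simp [this, TCfwd]
  | succ j ih =>
    have ih' := ih (by omega)
    have hne : e ≠ [] := by intro h; rw [h] at hj; simp at hj
    obtain ⟨x, es, rfl⟩ := List.exists_cons_of_ne_nil hne
    have hE : (x :: es).getD (j + 1) 0 = es.getD j 0 := List.getD_cons_succ
    have hu : TCfwd (x :: es) (j + 3) =
        (x :: es).getD (j + 1) 0 * TCfwd (x :: es) (j + 2) - TCfwd (x :: es) (j + 1) := rfl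
    have hv : TCfwd es (j + 2) = es.getD j 0 * TCfwd es (j + 1) - TCfwd es j := rfl
    simp only [List.tail_cons] at ih'
    show TCfwd (x :: es) (j + 3) * TCfwd es (j+1) - TCfwd (x :: es) (j + 2) * TCfwd es (j+2) = -1
    rw [hu, hv, hE]
    linear_combination ih'

/-! ### plusLast lemmas -/

lemma plusLast_length (l : List ℤ) : (plusLast l).length = l.length := by
  induction l with
  | nil => rfl
  | cons x l ih =>
    cases l with
    | nil => rfl
    | cons y l' => simpa [plusLast] using ih

lemma plusLast_getD_of_lt (l : List ℤ) (j : ℕ) (hj : j + 1 < l.length) :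
    (plusLast l).getD j 0 = l.getD j 0 := by
  induction l generalizing j with
  | nil => simp at hj
  | cons x l ih =>
    cases l with
    | nil => simp at hj
    | cons y l' =>
      cases j with
      | zero => rfl
      | succ j =>
        show (plusLast (y :: l')).getD j 0 = (y :: l').getD j 0
        exact ih j (by simpa using hj)

lemma plusLast_getD_last (l : List ℤ) (hne : l ≠ []) :
    (plusLast l).getD (l.length - 1) 0 = l.getD (l.length - 1) 0 + 1 := by
  induction l with
  | nil => simp at hne
  | cons x l ih =>
    cases l with
    | nil => rfl
    | cons y l' =>
      have := ih (by simp)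
      simpa [plusLast] using this

lemma plusLast_mem (l : List ℤ) (h : ∀ x ∈ l, 2 ≤ x) : ∀ x ∈ plusLast l, 2 ≤ x := by
  induction l with
  | nil => simp [plusLast]
  | cons a l ih =>
    cases l with
    | nil =>
      intro x hx
      simp only [plusLast, List.mem_singleton] at hx
      have := h a (by simp)
      omega
    | cons y l' =>
      intro x hx
      simp only [plusLast, List.mem_cons] at hx
      rcases hx with rfl | hx
      · exact h x (by simp)
      · exact ih (fun z hz => h z (by simp [hz])) x (by simpa [plusLast] using hx)

/-! ### Discrepancies: existence from a `t`-sequence, and uniqueness -/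

lemma disc_of_t (e : List ℤ) (m : ℤ) (hm : m ≠ 0) (t : ℕ → ℤ)
    (h0 : t 0 = m) (hL : t (e.length + 1) = m)
    (hrec : ∀ j, j + 1 ≤ e.length → t j + t (j + 2) = e.getD j 0 * t (j + 1)) :
    IsDiscrepancy e (fun i => -1 + (t i : ℚ) / (m : ℚ)) := by
  have hmQ : (m : ℚ) ≠ 0 := Int.cast_ne_zero.mpr hm
  refine ⟨?_, ?_, ?_⟩
  · show -1 + (t 0 : ℚ) / m = 0
    rw [h0]; field_simp; norm_num
  · show -1 + (t (e.length + 1) : ℚ) / m = 0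
    rw [hL]; field_simp; norm_num
  intro i h1 h2
  obtain ⟨j, rfl⟩ : ∃ j, i = j + 1 := ⟨i - 1, by omega⟩
  have h := hrec j (by omega)
  have hq : (t j : ℚ) + (t (j + 2) : ℚ) = (e.getD j 0 : ℚ) * (t (j + 1) : ℚ) := by
    exact_mod_cast h
  show (-1 + (t (j + 1 - 1) : ℚ) / m) - _ * (-1 + (t (j+1) : ℚ) / m) + (-1 + (t (j+1+1) : ℚ) / m)
      = _ - 2
  simp only [Nat.add_sub_cancel]
  linear_combination hq / m

lemma disc_unique (e : List ℤ) (he2 : ∀ x ∈ e, 2 ≤ x) (δ₁ δ₂ : ℕ → ℚ)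
    (h1 : IsDiscrepancy e δ₁) (h2 : IsDiscrepancy e δ₂) :
    ∀ i, i ≤ e.length + 1 → δ₁ i = δ₂ i := by
  set γ : ℕ → ℚ := fun i => δ₁ i - δ₂ i with hγ
  have key : ∀ i, i ≤ e.length → γ i = γ 1 * (TCfwd e i : ℚ) ∧
      γ (i + 1) = γ 1 * (TCfwd e (i + 1) : ℚ) := by
    intro i
    induction i with
    | zero =>
      intro _
      constructor
      · simp [hγ, h1.1, h2.1, TCfwd]
      · simp [TCfwd]
    | succ i ih =>
      intro hi
      obtain ⟨k0, k1⟩ := ih (by omega)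
      refine ⟨k1, ?_⟩
      have e1 := h1.2.2 (i + 1) (by omega) (by omega)
      have e2 := h2.2.2 (i + 1) (by omega) (by omega)
      simp only [Nat.add_sub_cancel] at e1 e2
      have hrec : γ i - (e.getD i 0 : ℚ) * γ (i + 1) + γ (i + 2) = 0 := by
        simp only [hγ]; linear_combination e1 - e2
      have hu : TCfwd e (i + 2) = e.getD i 0 * TCfwd e (i + 1) - TCfwd e i := rfl
      have huQ : (TCfwd e (i + 2) : ℚ)
          = (e.getD i 0 : ℚ) * (TCfwd e (i + 1) : ℚ) - (TCfwd e i : ℚ) := by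
        exact_mod_cast congrArg (fun z : ℤ => (z : ℚ)) hu
      rw [huQ]
      linear_combination hrec + (e.getD i 0 : ℚ) * k1 - k0
  have hlast : γ (e.length + 1) = 0 := by simp [hγ, h1.2.1, h2.2.1]
  have htop : (1 : ℤ) ≤ TCfwd e (e.length + 1) := by
    rw [TCfwd_top]; exact (TCcont_ge e he2).1
  have h10 : γ 1 = 0 := by
    rcases Nat.eq_zero_or_pos e.length with h | h
    · have a1 : δ₁ 1 = 0 := by simpa [h] using h1.2.1
      have a2 : δ₂ 1 = 0 := by simpa [h] using h2.2.1
      simp [hγ, a1, a2]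
    · have k := (key e.length le_rfl).2
      rw [hlast] at k
      have : (TCfwd e (e.length + 1) : ℚ) ≠ 0 := by
        exact_mod_cast (by omega : TCfwd e (e.length + 1) ≠ 0)
      field_simp at k
      exact (mul_eq_zero.mp k.symm).resolve_right this
  intro i hi
  have : γ i = 0 := by
    rcases Nat.lt_or_ge i (e.length + 1) with h | h
    · have := (key i (by omega)).1
      rw [h10] at this; simpa using this
    · have : i = e.length + 1 := by omega
      rw [this]; exact hlast
  have : δ₁ i - δ₂ i = 0 := this
  linarith

/-! ### The core lemma: the `t`-sequence of a T-chain -/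

lemma TCcore (d n a : ℤ) (hd : 1 ≤ d) (hn : 2 ≤ n) (ha0 : 0 < a) (han : a < n)
    (e : List ℤ) (he2 : ∀ x ∈ e, 2 ≤ x) (hne : e ≠ [])
    (hval : hjVal e = ((d * n ^ 2 : ℤ) : ℚ) / ((d * n * a - 1 : ℤ) : ℚ)) :
    ∃ t : ℕ → ℤ, t 0 = n ∧ t 1 = a ∧ t e.length = n - a ∧ t (e.length + 1) = n ∧
      (∀ i, 1 ≤ i → i ≤ e.length → 0 < t i) ∧
      (∀ j, j + 1 ≤ e.length → t j + t (j + 2) = e.getD j 0 * t (j + 1)) := by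
  have hr1 : 1 ≤ e.length := List.length_pos_iff.mpr hne
  set N : ℤ := d * n ^ 2 with hN
  set q : ℤ := d * n * a - 1 with hq
  have hNpos : 0 < N := by positivity
  have hqpos : 0 < q := by nlinarith
  have hcop : IsCoprime N q := by
    have c1 : IsCoprime (d * n) q := ⟨a, -1, by rw [hq]; ring⟩
    have c2 : IsCoprime n q := ⟨d * a, -1, by rw [hq]; ring⟩
    have := c1.mul_left c2
    rwa [show d * n * n = N by rw [hN]; ring] at this
  -- determine cont e and cont e.tail
  have hct1 : 1 ≤ TCcont e := (TCcont_ge e he2).1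
  have hcq1 : 1 ≤ TCcont e.tail := by
    have : ∀ x ∈ e.tail, 2 ≤ x := fun x hx => he2 x (List.mem_of_mem_tail hx)
    exact (TCcont_ge e.tail this).1
  have hfrac := TChjVal_eq e hne he2
  rw [hval] at hfrac
  have hcross : TCcont e * q = N * TCcont e.tail := by
    have hq0 : ((q : ℤ) : ℚ) ≠ 0 := Int.cast_ne_zero.mpr (by omega)
    have hcq0 : ((TCcont e.tail : ℤ) : ℚ) ≠ 0 := Int.cast_ne_zero.mpr (by omega)
    have := (div_eq_div_iff hq0 hcq0).mp hfrac
    exact_mod_cast this.symm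
  have hdvd1 : TCcont e ∣ N := by
    have h1 : TCcont e ∣ N * TCcont e.tail := ⟨q, hcross.symm⟩
    exact (TCcont_coprime e).dvd_of_dvd_mul_right h1
  have hdvd2 : N ∣ TCcont e := by
    have h1 : N ∣ TCcont e * q := ⟨TCcont e.tail, hcross⟩
    exact hcop.dvd_of_dvd_mul_right h1
  have hctN : TCcont e = N := Int.dvd_antisymm (by omega) (by omega) hdvd1 hdvd2
  have hcqq : TCcont e.tail = q := by
    have h1 := hcross
    rw [hctN] at h1
    exact (mul_left_cancel₀ (by omega : N ≠ 0) h1).symm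
  -- determine u_r = fwd e (e.length)
  obtain ⟨r', hr'⟩ : ∃ r', e.length = r' + 1 := ⟨e.length - 1, by omega⟩
  have hmono := TCfwd_pos e he2
  have hurlt : TCfwd e e.length < N := by
    have := (hmono e.length le_rfl).2
    rwa [TCfwd_top, hctN] at this
  have hurge : 1 ≤ TCfwd e e.length := by
    have h0 := (hmono r' (by omega)).1
    have h1 := (hmono r' (by omega)).2
    rw [hr']
    omega
  have htail_len : e.tail.length = r' := by
    rw [List.length_tail, hr']
    omega
  have hw := TCtail_wronskian e r' (by omega)
  have hfr2 : TCfwd e (r' + 2) = N := by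
    have : r' + 2 = e.length + 1 := by omega
    rw [this, TCfwd_top, hctN]
  have hft : TCfwd e.tail (r' + 1) = q := by
    have : r' + 1 = e.tail.length + 1 := by omega
    rw [this, TCfwd_top, hcqq]
  rw [hfr2, hft] at hw
  -- hw : N * TCfwd e.tail r' - TCfwd e (r' + 1) * q = -1
  have hur : TCfwd e e.length = N - d * n * a - 1 := by
    set u : ℤ := TCfwd e e.length with hu
    set c : ℤ := N - d * n * a - 1 with hc
    have hru : TCfwd e (r' + 1) = u := by rw [hu, hr']
    rw [hru] at hw
    have key : (u - c) * q = N * (TCfwd e.tail r' - d * n * a + 1 + d * a ^ 2) := by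
      rw [hc, hq, hN]; rw [hq, hN] at hw; linear_combination -hw
    have hNd : N ∣ u - c := hcop.dvd_of_dvd_mul_right ⟨_, key⟩
    have hc1 : 1 ≤ c := by rw [hc, hN]; nlinarith
    have hc2 : c ≤ N - 2 := by rw [hc]; nlinarith
    have : u - c = 0 := Int.eq_zero_of_abs_lt_dvd hNd (by rw [abs_lt]; omega)
    omega
  -- the w-sequence
  set w : ℕ → ℤ := fun i => TCfwd e i + TCbwd e i with hwdef
  have hw0 : w 0 = N := by
    simp only [hwdef]
    have : TCbwd e 0 = TCcont e := by unfold TCbwd; rw [if_pos (by omega)]; simp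
    rw [this, hctN]; simp [TCfwd]
  have hw1 : w 1 = d * n * a := by
    simp only [hwdef]
    have : TCbwd e 1 = TCcont e.tail := by
      unfold TCbwd; rw [if_pos (by omega)]
      congr 1
      exact List.drop_one
    rw [this, hcqq, hq]
    simp [TCfwd]
  have hwr : w e.length = d * n * (n - a) := by
    simp only [hwdef]
    have : TCbwd e e.length = 1 := by
      unfold TCbwd; rw [if_pos le_rfl]; simp [TCcont]
    rw [this, hur, hN]; ring
  have hwr1 : w (e.length + 1) = N := by
    simp only [hwdef]
    have h1 : TCbwd e (e.length + 1) = 0 := by unfold TCbwd; rw [if_neg (by omega)]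
    rw [h1, TCfwd_top, hctN]; ring
  have hwrec : ∀ j, j + 1 ≤ e.length → w (j + 2) = e.getD j 0 * w (j + 1) - w j := by
    intro j hj
    simp only [hwdef]
    have hu : TCfwd e (j + 2) = e.getD j 0 * TCfwd e (j + 1) - TCfwd e j := rfl
    have hv := TCbwd_rec e j (by omega)
    rw [hu]; linarith
  have hdvdw : ∀ i, i ≤ e.length → (d * n ∣ w i ∧ d * n ∣ w (i + 1)) := by
    intro i
    induction i with
    | zero =>
      intro _
      exact ⟨by rw [hw0, hN]; exact ⟨n, by ring⟩, by rw [hw1]; exact ⟨a, by ring⟩⟩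
    | succ i ih =>
      intro hi
      obtain ⟨d0, d1⟩ := ih (by omega)
      refine ⟨d1, ?_⟩
      rw [hwrec i (by omega)]
      exact dvd_sub (Dvd.dvd.mul_left d1 _) d0
  have hdvd' : ∀ i, i ≤ e.length + 1 → d * n ∣ w i := by
    intro i hi
    rcases Nat.lt_or_ge i (e.length + 1) with h | h
    · exact (hdvdw i (by omega)).1
    · have : i = e.length + 1 := by omega
      rw [this]
      exact (hdvdw e.length le_rfl).2
  have hwpos : ∀ i, i ≤ e.length + 1 → 0 < w i := by
    intro i hi
    rcases Nat.lt_or_ge i (e.length + 1) with h | h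
    · have h1 : 0 ≤ TCfwd e i := (hmono i (by omega)).1
      have h2 : 1 ≤ TCbwd e i := by
        unfold TCbwd; rw [if_pos (by omega)]
        refine (TCcont_ge _ (fun x hx => he2 x ?_)).1
        exact List.mem_of_mem_drop hx
      simp only [hwdef]; omega
    · have : i = e.length + 1 := by omega
      rw [this, hwr1]; omega
  have hdn0 : d * n ≠ 0 := by positivity
  have hdnpos : 0 < d * n := by positivity
  refine ⟨fun i => w i / (d * n), ?_, ?_, ?_, ?_, ?_, ?_⟩
  · show w 0 / (d * n) = n
    rw [hw0, hN, show d * n ^ 2 = d * n * n by ring]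
    exact Int.mul_ediv_cancel_left n hdn0
  · show w 1 / (d * n) = a
    rw [hw1]
    exact Int.mul_ediv_cancel_left a hdn0
  · show w e.length / (d * n) = n - a
    rw [hwr]
    exact Int.mul_ediv_cancel_left (n - a) hdn0
  · show w (e.length + 1) / (d * n) = n
    rw [hwr1, hN, show d * n ^ 2 = d * n * n by ring]
    exact Int.mul_ediv_cancel_left n hdn0
  · intro i h1 h2
    show 0 < w i / (d * n)
    have hpos := hwpos i (by omega)
    obtain ⟨k, hk⟩ := hdvd' i (by omega)
    rw [hk, Int.mul_ediv_cancel_left k hdn0]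
    nlinarith
  · intro j hj
    show w j / (d * n) + w (j + 2) / (d * n) = e.getD j 0 * (w (j + 1) / (d * n))
    obtain ⟨k0, hk0⟩ := hdvd' j (by omega)
    obtain ⟨k1, hk1⟩ := hdvd' (j + 1) (by omega)
    obtain ⟨k2, hk2⟩ := hdvd' (j + 2) (by omega)
    have hrec := hwrec j hj
    rw [hk0, hk1, hk2] at hrec
    rw [hk0, hk1, hk2, Int.mul_ediv_cancel_left k0 hdn0, Int.mul_ediv_cancel_left k1 hdn0,
      Int.mul_ediv_cancel_left k2 hdn0]
    have : d * n * (k0 + k2) = d * n * (e.getD j 0 * k1) := by linear_combination hrec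
    have := mul_left_cancel₀ hdn0 this
    linarith
/-- For a T-chain of type `(d,n,a)` the discrepancies are `δ_i = -1 + t_i/n` with
`t_i > 0` and `t_1 + t_r = n`; and the discrepancies of the two augmented T-chains
`(e₁+1,e₂,...,e_r,2)` and `(2,e₁,...,e_{r-1},e_r+1)` are as stated. -/
theorem t_chain_discrepancies (d n a : ℤ) (hd : 1 ≤ d) (hn : 2 ≤ n)
    (ha0 : 0 < a) (han : a < n) (hgcd : Int.gcd a n = 1)
    (e : List ℤ) (he2 : ∀ x ∈ e, 2 ≤ x)
    (hval : hjVal e = ((d * n ^ 2 : ℤ) : ℚ) / ((d * n * a - 1 : ℤ) : ℚ))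
    (δ : ℕ → ℚ) (hδ : IsDiscrepancy e δ) :
    ∃ t : ℕ → ℤ,
      (∀ i : ℕ, 1 ≤ i → i ≤ e.length → 0 < t i) ∧
      (∀ i : ℕ, 1 ≤ i → i ≤ e.length → δ i = -1 + (t i : ℚ) / (n : ℚ)) ∧
      t 1 + t e.length = n ∧
      (∀ δ' : ℕ → ℚ, IsDiscrepancy (plusFirst e ++ [2]) δ' →
        (∀ i : ℕ, 1 ≤ i → i ≤ e.length →
          δ' i = -1 + (t i : ℚ) / ((n + t 1 : ℤ) : ℚ)) ∧
        δ' (e.length + 1)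
          = -1 + ((t 1 + t e.length : ℤ) : ℚ) / ((n + t 1 : ℤ) : ℚ)) ∧
      (∀ δ'' : ℕ → ℚ, IsDiscrepancy (2 :: plusLast e) δ'' →
        δ'' 1 = -1 + ((t 1 + t e.length : ℤ) : ℚ) / ((n + t e.length : ℤ) : ℚ) ∧
        (∀ i : ℕ, 1 ≤ i → i ≤ e.length →
          δ'' (i + 1) = -1 + (t i : ℚ) / ((n + t e.length : ℤ) : ℚ))) := by
  have hne : e ≠ [] := by
    intro h
    subst h
    have h0 : hjVal ([] : List ℤ) = 0 := rfl
    rw [h0] at hval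
    have h1 : (n:ℤ) * 1 ≤ n * a := by
      apply mul_le_mul_of_nonneg_left (by omega) (by omega)
    have h3 : (1:ℤ) * (n * a) ≤ d * (n * a) := by
      apply mul_le_mul_of_nonneg_right hd (by nlinarith)
    have hq0 : (0:ℤ) < d * n * a - 1 := by nlinarith
    have hN0 : (0:ℤ) < d * n ^ 2 := by positivity
    rcases div_eq_zero_iff.mp hval.symm with h | h
    · have hh : (d * n ^ 2 : ℤ) = 0 := by exact_mod_cast h
      linarith
    · have hh : (d * n * a - 1 : ℤ) = 0 := by exact_mod_cast h
      linarith
  obtain ⟨t, ht0, ht1, htr, htr1, htpos, htrec⟩ :=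
    TCcore d n a hd hn ha0 han e he2 hne hval
  obtain ⟨e0, es, rfl⟩ := List.exists_cons_of_ne_nil hne
  set R : ℕ := es.length with hR
  have hlen : (e0 :: es).length = R + 1 := by simp [hR]
  rw [hlen] at htr htr1 htpos htrec ⊢
  have hsum : t 1 + t (R + 1) = n := by rw [ht1, htr]; ring
  have hn0 : (n : ℤ) ≠ 0 := by omega
  have hna0 : (n + a : ℤ) ≠ 0 := by omega
  have h2na0 : (2 * n - a : ℤ) ≠ 0 := by omega
  -- the given δ satisfies the closed formula
  have hIs : IsDiscrepancy (e0 :: es) (fun i => -1 + (t i : ℚ) / ((n : ℤ) : ℚ)) := by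
    have h1 : t ((e0 :: es).length + 1) = n := by rw [hlen]; exact htr1
    have h2 : ∀ j, j + 1 ≤ (e0 :: es).length →
        t j + t (j + 2) = (e0 :: es).getD j 0 * t (j + 1) := by
      intro j hj; exact htrec j (by rw [hlen] at hj; omega)
    exact disc_of_t (e0 :: es) n hn0 t ht0 h1 h2
  have hδeq := disc_unique (e0 :: es) he2 δ _ hδ hIs
  refine ⟨t, htpos, ?_, hsum, ?_, ?_⟩
  · intro i hi1 hi2
    have h : δ i = -1 + (t i : ℚ) / ((n : ℤ) : ℚ) := hδeq i (by rw [hlen]; omega)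
    rw [h]
  ------------------------------------------------------------------
  -- first augmented chain
  ------------------------------------------------------------------
  · intro δ' hδ'
    set E1 : List ℤ := plusFirst (e0 :: es) ++ [2] with hE1
    have hE1len : E1.length = R + 2 := by simp [hE1, plusFirst, hR]
    set t' : ℕ → ℤ := fun i => if i = 0 then n + a else if i ≤ R + 2 then t i else n + a
      with ht'
    have ht'eq : ∀ i, 1 ≤ i → i ≤ R + 2 → t' i = t i := by
      intro i h1 h2
      simp only [ht']
      rw [if_neg (by omega), if_pos (by omega)]
    have ht'0 : t' 0 = n + a := by simp [ht']
    have ht'top : t' (R + 3) = n + a := by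
      simp only [ht']; rw [if_neg (by omega), if_neg (by omega)]
    have hE1mem : ∀ x ∈ E1, 2 ≤ x := by
      intro x hx
      rw [hE1] at hx
      simp only [plusFirst, List.cons_append, List.mem_cons, List.mem_append,
        List.mem_singleton, List.not_mem_nil, or_false] at hx
      rcases hx with rfl | hx | rfl
      · have := he2 e0 (by simp); omega
      · exact he2 x (by simp [hx])
      · omega
    have hget0 : E1.getD 0 0 = e0 + 1 := rfl
    have hgetm : ∀ j, 1 ≤ j → j ≤ R → E1.getD j 0 = (e0 :: es).getD j 0 := by
      intro j hj1 hj2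
      obtain ⟨k, rfl⟩ : ∃ k, j = k + 1 := ⟨j - 1, by omega⟩
      show ((((e0 + 1) :: es) ++ [2] : List ℤ)).getD (k + 1) 0 = (e0 :: es).getD (k + 1) 0
      rw [List.cons_append, List.getD_cons_succ, List.getD_cons_succ]
      simp [List.getD, List.getElem?_append_left (by omega : k < es.length)]
    have hgetR : E1.getD (R + 1) 0 = 2 := by
      show ((((e0 + 1) :: es) ++ [2] : List ℤ)).getD (R + 1) 0 = 2
      rw [List.cons_append, List.getD_cons_succ]
      rw [show R = es.length from hR]
      simp [List.getD]
    have hrec' : ∀ j, j + 1 ≤ E1.length → t' j + t' (j + 2) = E1.getD j 0 * t' (j + 1) := by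
      intro j hj
      rw [hE1len] at hj
      rcases Nat.eq_zero_or_pos j with rfl | hj0
      · rw [hget0, ht'0, ht'eq 2 (by omega) (by omega), ht'eq 1 (by omega) (by omega), ht1]
        have h := htrec 0 (by omega)
        have hg : (e0 :: es).getD 0 0 = e0 := rfl
        rw [hg, ht0, ht1] at h
        linear_combination h
      · rcases Nat.lt_or_ge j (R + 1) with hjR | hjR
        · rw [ht'eq j (by omega) (by omega), ht'eq (j + 1) (by omega) (by omega),
            ht'eq (j + 2) (by omega) (by omega), hgetm j (by omega) (by omega)]
          exact htrec j (by omega)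
        · have hjeq : j = R + 1 := by omega
          subst hjeq
          rw [ht'eq (R + 1) (by omega) (by omega), show R + 1 + 2 = R + 3 from rfl, ht'top,
            show R + 1 + 1 = R + 2 from rfl, ht'eq (R + 2) (by omega) (by omega),
            hgetR, htr, htr1]
          ring
    have hIs' : IsDiscrepancy E1 (fun i => -1 + (t' i : ℚ) / ((n + a : ℤ) : ℚ)) := by
      refine disc_of_t E1 (n + a) hna0 t' ht'0 ?_ hrec'
      rw [hE1len]; exact ht'top
    have huniq := disc_unique E1 hE1mem δ' _ hδ' hIs'
    constructor
    · intro i hi1 hi2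
      have h : δ' i = -1 + (t' i : ℚ) / ((n + a : ℤ) : ℚ) :=
        huniq i (by rw [hE1len]; omega)
      rw [h, ht'eq i (by omega) (by omega), ht1]
    · have h : δ' (R + 2) = -1 + (t' (R + 2) : ℚ) / ((n + a : ℤ) : ℚ) :=
        huniq (R + 2) (by rw [hE1len]; omega)
      rw [show R + 1 + 1 = R + 2 from rfl, h, ht'eq (R + 2) (by omega) (by omega), htr1,
        ht1, htr, show (a + (n - a) : ℤ) = n by ring]
  ------------------------------------------------------------------
  -- second augmented chain
  ------------------------------------------------------------------
  · intro δ'' hδ''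
    set E2 : List ℤ := 2 :: plusLast (e0 :: es) with hE2
    have hE2len : E2.length = R + 2 := by
      rw [hE2]
      show (plusLast (e0 :: es)).length + 1 = R + 2
      rw [plusLast_length, hlen]
    set t'' : ℕ → ℤ := fun j => if j = 0 then 2 * n - a else
        if j ≤ R + 2 then t (j - 1) else 2 * n - a with ht''
    have ht''eq : ∀ j, 1 ≤ j → j ≤ R + 2 → t'' j = t (j - 1) := by
      intro j h1 h2
      simp only [ht'']
      rw [if_neg (by omega), if_pos (by omega)]
    have ht''0 : t'' 0 = 2 * n - a := by simp [ht'']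
    have ht''top : t'' (R + 3) = 2 * n - a := by
      simp only [ht'']; rw [if_neg (by omega), if_neg (by omega)]
    have hE2mem : ∀ x ∈ E2, 2 ≤ x := by
      intro x hx
      rw [hE2, List.mem_cons] at hx
      rcases hx with rfl | hx
      · omega
      · exact plusLast_mem (e0 :: es) he2 x hx
    have hget0 : E2.getD 0 0 = 2 := rfl
    have hgetm : ∀ j, 1 ≤ j → j ≤ R → E2.getD j 0 = (e0 :: es).getD (j - 1) 0 := by
      intro j hj1 hj2
      obtain ⟨k, rfl⟩ : ∃ k, j = k + 1 := ⟨j - 1, by omega⟩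
      rw [hE2, List.getD_cons_succ, Nat.add_sub_cancel]
      exact plusLast_getD_of_lt (e0 :: es) k (by rw [hlen]; omega)
    have hgetR : E2.getD (R + 1) 0 = (e0 :: es).getD R 0 + 1 := by
      rw [hE2, List.getD_cons_succ]
      have := plusLast_getD_last (e0 :: es) (by simp)
      rw [hlen] at this
      simpa using this
    have hrec'' : ∀ j, j + 1 ≤ E2.length → t'' j + t'' (j + 2) = E2.getD j 0 * t'' (j + 1) :=
      by
      intro j hj
      rw [hE2len] at hj
      rcases Nat.eq_zero_or_pos j with rfl | hj0
      · rw [hget0, ht''0, ht''eq 2 (by omega) (by omega), ht''eq 1 (by omega) (by omega)]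
        rw [show (2:ℕ) - 1 = 1 from rfl, show (1:ℕ) - 1 = 0 from rfl, ht0, ht1]
        show 2 * n - a + a = 2 * n
        ring
      · rcases Nat.lt_or_ge j (R + 1) with hjR | hjR
        · obtain ⟨k, rfl⟩ : ∃ k, j = k + 1 := ⟨j - 1, by omega⟩
          rw [ht''eq (k + 1) (by omega) (by omega), ht''eq (k + 1 + 1) (by omega) (by omega),
            ht''eq (k + 1 + 2) (by omega) (by omega), hgetm (k + 1) (by omega) (by omega)]
          simp only [Nat.add_sub_cancel]
          have h := htrec k (by omega)
          convert h using 3 <;> omega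
        · have hjeq : j = R + 1 := by omega
          subst hjeq
          rw [ht''eq (R + 1) (by omega) (by omega), show R + 1 + 2 = R + 3 from rfl, ht''top,
            show R + 1 + 1 = R + 2 from rfl, ht''eq (R + 2) (by omega) (by omega), hgetR,
            show R + 2 - 1 = R + 1 from by omega, show R + 1 - 1 = R from by omega]
          have h := htrec R (by omega)
          rw [htr] at h
          rw [htr]
          have h2 : t (R + 2) = n := htr1
          rw [h2] at h
          linear_combination h
    have hIs'' : IsDiscrepancy E2 (fun i => -1 + (t'' i : ℚ) / ((2 * n - a : ℤ) : ℚ)) := by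
      refine disc_of_t E2 (2 * n - a) h2na0 t'' ht''0 ?_ hrec''
      rw [hE2len]; exact ht''top
    have huniq := disc_unique E2 hE2mem δ'' _ hδ'' hIs''
    constructor
    · have h : δ'' 1 = -1 + (t'' 1 : ℚ) / ((2 * n - a : ℤ) : ℚ) :=
        huniq 1 (by rw [hE2len]; omega)
      rw [h, ht''eq 1 (by omega) (by omega)]
      show -1 + (t 0 : ℚ) / _ = _
      rw [ht0, ht1, htr, show (a + (n - a) : ℤ) = n by ring,
        show (n + (n - a) : ℤ) = 2 * n - a by ring]
    · intro i hi1 hi2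
      have h : δ'' (i + 1) = -1 + (t'' (i + 1) : ℚ) / ((2 * n - a : ℤ) : ℚ) :=
        huniq (i + 1) (by rw [hE2len]; omega)
      rw [h, ht''eq (i + 1) (by omega) (by omega)]
      simp only [Nat.add_sub_cancel]
      rw [htr, show (n + (n - a) : ℤ) = 2 * n - a by ring]
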